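/- Hölder-class MSE bound: if g ∈ G(C, x, α), i.e., |g(x + δy) - g(x)| ≤ Cδ^α for all ‖y‖ ≤ 1 and 0 ≤ δ ≤ 1, and the kernel K is nonincreasing, supported on [0,c] with K(0) > 0, then on the event N₁ := ∑ᵢ K(‖x - X_i‖/h) > 0 and for ch ≤ 1, E[(ĝ(x) - g(x))² | X₁,…,X_n] ≤ C²(ch)^{2α} + σ²K(0)/N₁. -/

import Mathlib

open MeasureTheory ProbabilityTheory

/-- Hölder-class MSE bound: if `g ∈ G(C,x,α)`, i.e. `|g(x + δy) - g(x)| ≤ C δ^α` for all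
`‖y‖ ≤ 1` and `0 ≤ δ ≤ 1`, the kernel `K` is nonincreasing, nonnegative, supported on `[0,c]`
with `K(0) > 0`, and (conditionally on the predictors, held fixed) the errors are
independent, mean zero, with variance `σ²`, then on the event `N₁ = ∑ᵢ Kᵢ(x) > 0`, for
`ch ≤ 1`, the conditional mean squared error satisfies
`E[(ĝ(x) - g(x))²] ≤ C²(ch)^{2α} + σ² K(0)/N₁`. -/
theorem stmt_15 {Ω : Type*} [MeasurableSpace Ω] (μ : Measure Ω) [IsProbabilityMeasure μ]
    {H : Type*} [NormedAddCommGroup H] [NormedSpace ℝ H]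
    (n : ℕ) (X : Fin n → H) (x : H) (g : H → ℝ) (K : ℝ → ℝ) (C c h α σ : ℝ)
    (hC : 0 < C) (hc : 0 < c) (hh : 0 < h) (hα0 : 0 < α) (hα1 : α ≤ 1)
    (hch : c * h ≤ 1)
    (hg : ∀ y : H, ‖y‖ ≤ 1 → ∀ δ : ℝ, 0 ≤ δ → δ ≤ 1 → |g (x + δ • y) - g x| ≤ C * δ ^ α)
    (hKnonneg : ∀ t : ℝ, 0 ≤ K t)
    (hKmono : ∀ s t : ℝ, 0 ≤ s → s ≤ t → K t ≤ K s)
    (hKsupp : ∀ t : ℝ, c < t → K t = 0)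
    (hK0 : 0 < K 0)
    (ε : Fin n → Ω → ℝ)
    (hmeas : ∀ i, Measurable (ε i))
    (hind : iIndepFun ε μ)
    (hL2 : ∀ i, MemLp (ε i) 2 μ)
    (hmean : ∀ i, ∫ ω, ε i ω ∂μ = 0)
    (hvar : ∀ i, variance (ε i) μ = σ ^ 2)
    (Kx : Fin n → ℝ) (hKx : ∀ i, Kx i = K (‖x - X i‖ / h))
    (hpos : 0 < ∑ i, Kx i) :
    ∫ ω, ((∑ i, (g (X i) + ε i ω) * Kx i) / (∑ i, Kx i) - g x) ^ 2 ∂μ ≤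
      C ^ 2 * (c * h) ^ (2 * α) + σ ^ 2 * K 0 / ∑ i, Kx i := by
  set N : ℝ := ∑ i, Kx i with hN
  have hch0 : 0 < c * h := mul_pos hc hh
  have hKxnn : ∀ i, 0 ≤ Kx i := fun i => (hKx i) ▸ hKnonneg _
  have hKxle : ∀ i, Kx i ≤ K 0 := fun i => by
    rw [hKx i]
    exact hKmono 0 _ le_rfl (div_nonneg (norm_nonneg _) hh.le)
  -- pointwise bias bound
  have hbias : ∀ i, |g (X i) - g x| * Kx i ≤ C * (c * h) ^ α * Kx i := by
    intro i
    rcases eq_or_lt_of_le (hKxnn i) with h0 | h0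
    · rw [← h0, mul_zero, mul_zero]
    · have hle : ‖x - X i‖ / h ≤ c := by
        by_contra hlt
        exact h0.ne' (by rw [hKx i, hKsupp _ (lt_of_not_ge hlt)])
      have hδch : ‖X i - x‖ ≤ c * h := by
        rw [norm_sub_rev]
        calc ‖x - X i‖ = (‖x - X i‖ / h) * h := by field_simp
        _ ≤ c * h := mul_le_mul_of_nonneg_right hle hh.le
      have hδnn : (0:ℝ) ≤ ‖X i - x‖ := norm_nonneg _
      have key : |g (X i) - g x| ≤ C * (c * h) ^ α := by
        rcases eq_or_lt_of_le hδnn with hδ0 | hδ0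
        · have hXx : X i = x := norm_sub_eq_zero_iff.mp hδ0.symm
          rw [hXx, sub_self, abs_zero]
          positivity
        · set δ : ℝ := ‖X i - x‖ with hδdef
          have hy : ‖δ⁻¹ • (X i - x)‖ ≤ 1 := by
            rw [norm_smul, norm_inv, Real.norm_eq_abs, abs_of_pos hδ0, ← hδdef,
              inv_mul_cancel₀ hδ0.ne']
          have hxi : x + δ • (δ⁻¹ • (X i - x)) = X i := by
            rw [smul_smul, mul_inv_cancel₀ hδ0.ne', one_smul]
            abel
          have h1 := hg _ hy δ hδnn (hδch.trans hch)
          rw [hxi] at h1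
          calc |g (X i) - g x| ≤ C * δ ^ α := h1
          _ ≤ C * (c * h) ^ α :=
            mul_le_mul_of_nonneg_left (Real.rpow_le_rpow hδnn hδch hα0.le) hC.le
      exact mul_le_mul_of_nonneg_right key (hKxnn i)
  -- the bias
  set b : ℝ := (∑ i, g (X i) * Kx i) / N - g x with hb
  have hbsq : b ^ 2 ≤ C ^ 2 * (c * h) ^ (2 * α) := by
    have habs_b : |b| ≤ C * (c * h) ^ α := by
      have hnum : ∑ i, (g (X i) - g x) * Kx i = (∑ i, g (X i) * Kx i) - g x * N := by
        rw [hN, Finset.mul_sum, ← Finset.sum_sub_distrib]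
        exact Finset.sum_congr rfl fun i _ => by ring
      have hrw : b = (∑ i, (g (X i) - g x) * Kx i) / N := by
        rw [hb, hnum, sub_div, mul_div_assoc, div_self hpos.ne', mul_one]
      rw [hrw, abs_div, abs_of_pos hpos, div_le_iff₀ hpos]
      calc |∑ i, (g (X i) - g x) * Kx i| ≤ ∑ i, |(g (X i) - g x) * Kx i| :=
            Finset.abs_sum_le_sum_abs _ _
        _ ≤ ∑ i, C * (c * h) ^ α * Kx i := by
            refine Finset.sum_le_sum fun i _ => ?_
            rw [abs_mul, abs_of_nonneg (hKxnn i)]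
            exact hbias i
        _ = C * (c * h) ^ α * N := by rw [hN, Finset.mul_sum]
    calc b ^ 2 = |b| ^ 2 := (sq_abs b).symm
      _ ≤ (C * (c * h) ^ α) ^ 2 := pow_le_pow_left₀ (abs_nonneg b) habs_b 2
      _ = C ^ 2 * (c * h) ^ (2 * α) := by
          rw [mul_pow, ← Real.rpow_natCast ((c * h) ^ α) 2, ← Real.rpow_mul hch0.le]
          norm_num [mul_comm]
  -- the stochastic part
  set T : Ω → ℝ := fun ω => ∑ i, Kx i * ε i ω with hT
  have hTeq : T = ∑ i, fun ω => Kx i * ε i ω := by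
    funext ω
    rw [hT, Finset.sum_apply]
  have hT2 : MemLp T 2 μ := by
    rw [hTeq]
    exact memLp_finset_sum' _ fun i _ => (hL2 i).const_mul (Kx i)
  have hTint : Integrable T μ := hT2.integrable one_le_two
  have hTmean : ∫ ω, T ω ∂μ = 0 := by
    rw [hT]
    rw [integral_finset_sum _ fun i _ => ((hL2 i).integrable one_le_two).const_mul _]
    simp [integral_const_mul, hmean]
  have hTvar : variance T μ = ∑ i, Kx i ^ 2 * σ ^ 2 := by
    have hpair : Set.Pairwise ↑(Finset.univ : Finset (Fin n))
        fun i j => IndepFun (fun ω => Kx i * ε i ω) (fun ω => Kx j * ε j ω) μ := by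
      intro i _ j _ hij
      exact (hind.indepFun hij).comp (measurable_const_mul (Kx i)) (measurable_const_mul (Kx j))
    rw [hTeq, IndepFun.variance_sum (fun i _ => (hL2 i).const_mul (Kx i)) hpair]
    refine Finset.sum_congr rfl fun i _ => ?_
    have : variance (Kx i • ε i) μ = Kx i ^ 2 * variance (ε i) μ := variance_smul _ _ _
    rw [← hvar i, ← this]
    rfl
  have hTsq : ∫ ω, T ω ^ 2 ∂μ = ∑ i, Kx i ^ 2 * σ ^ 2 := by
    have := variance_eq_sub hT2
    rw [hTvar.symm, this]
    simp only [Pi.pow_apply]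
    rw [show (μ[T] : ℝ) = 0 from hTmean]
    ring
  -- decompose the integral
  have hpt : ∀ ω, ((∑ i, (g (X i) + ε i ω) * Kx i) / N - g x) ^ 2
      = b ^ 2 + (2 * b / N) * T ω + T ω ^ 2 / N ^ 2 := by
    intro ω
    have hsum : ∑ i, (g (X i) + ε i ω) * Kx i = (∑ i, g (X i) * Kx i) + T ω := by
      rw [hT, ← Finset.sum_add_distrib]
      exact Finset.sum_congr rfl fun i _ => by ring
    rw [hsum, add_div, hb]
    field_simp
    ring
  have hint : ∫ ω, ((∑ i, (g (X i) + ε i ω) * Kx i) / N - g x) ^ 2 ∂μ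
      = b ^ 2 + (∑ i, Kx i ^ 2 * σ ^ 2) / N ^ 2 := by
    rw [integral_congr_ae (ae_of_all μ hpt)]
    have hi1 : Integrable (fun ω => b ^ 2 + 2 * b / N * T ω) μ :=
      (integrable_const _).add (hTint.const_mul _)
    have hi2 : Integrable (fun ω => T ω ^ 2 / N ^ 2) μ := hT2.integrable_sq.div_const _
    have hi3 : Integrable (fun ω => 2 * b / N * T ω) μ := hTint.const_mul _
    rw [integral_add hi1 hi2, integral_add (integrable_const _) hi3,
      integral_const, integral_const_mul, integral_div, hTmean, hTsq]
    simp
  rw [hint]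
  have h2 : (∑ i, Kx i ^ 2 * σ ^ 2) / N ^ 2 ≤ σ ^ 2 * K 0 / N := by
    have hsum : ∑ i, Kx i ^ 2 * σ ^ 2 ≤ σ ^ 2 * K 0 * N := by
      rw [hN, Finset.mul_sum]
      refine Finset.sum_le_sum fun i _ => ?_
      nlinarith [sq_nonneg σ, hKxnn i, hKxle i,
        mul_le_mul_of_nonneg_right (hKxle i) (hKxnn i)]
    calc (∑ i, Kx i ^ 2 * σ ^ 2) / N ^ 2 ≤ (σ ^ 2 * K 0 * N) / N ^ 2 := by gcongr
        _ = σ ^ 2 * K 0 / N := by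
          field_simp
  exact add_le_add hbsq h2
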